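/- Let r ≥ 2 be odd and n ≥ 2. In S_{2rn}, for 1 ≤ j ≤ n let A_j be the 2r-cycle (2r(j-1)+1, …, 2rj), let π = A_1⋯A_n, and for 1 ≤ i ≤ n-1 let B_i = ∏_{m=1}^{2r}(2r(i-1)+m, 2ri+m), so that the centralizer of π in S_{2rn} is generated by A_1,…,A_n, B_1,…,B_{n-1}. Let μ ∈ {1,-1} and let ρ be a group homomorphism from the centralizer of π to ℂˣ with ρ(A_j) = -1 for all 1 ≤ j ≤ n and ρ(B_i) = μ for all 1 ≤ i ≤ n-1, and assume ρ(π) = -1. Then for all elements t, t' in the conjugacy class of π with t t' = t' t, and all g, g' ∈ S_{2rn} with g π g⁻¹ = t and g' π g'⁻¹ = t', the elements g'⁻¹ t g' and g⁻¹ t' g lie in the centralizer of π, ρ(g⁻¹ t g) = -1, and ρ(g'⁻¹ t g') · ρ(g⁻¹ t' g) = 1. (In the paper's terminology: for r odd and ρ = χ_{r,…,r} ⊗ μ with ρ(π) = -1, the braiding is negative.) -/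

import Mathlib

open Equiv Equiv.Perm

namespace Stmt12Aux

variable {r n : ℕ}

lemma div_lt_n (hr : 0 < r) (x : Fin (2 * r * n)) : (x : ℕ) / (2 * r) < n := by
  have hx := x.2
  rw [Nat.div_lt_iff_lt_mul (by omega : 0 < 2 * r)]
  calc (x : ℕ) < 2 * r * n := hx
  _ = n * (2 * r) := by ring

def blk (hr : 0 < r) (x : Fin (2 * r * n)) : Fin n := ⟨(x : ℕ) / (2 * r), div_lt_n hr x⟩

def base (hr : 0 < r) (j : Fin n) : Fin (2 * r * n) :=
  ⟨2 * r * (j : ℕ), by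
    have := j.2
    exact (mul_lt_mul_iff_right₀ (by omega : (0:ℕ) < 2 * r)).2 this⟩

lemma blk_base (hr : 0 < r) (j : Fin n) : blk hr (base hr j) = j := by
  apply Fin.ext
  simp only [blk, base]
  exact Nat.mul_div_cancel_left _ (by omega)

lemma blk_eq_iff (hr : 0 < r) {x y : Fin (2 * r * n)} :
    blk hr x = blk hr y ↔ (x : ℕ) / (2 * r) = (y : ℕ) / (2 * r) := by
  constructor
  · intro h; exact congrArg Fin.val h
  · intro h; exact Fin.ext h

section Pi

variable (hr : 0 < r) {π : Equiv.Perm (Fin (2 * r * n))}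
  (hπ : ∀ x : Fin (2 * r * n),
    ((π x : ℕ)) = 2 * r * ((x : ℕ) / (2 * r)) + ((x : ℕ) % (2 * r) + 1) % (2 * r))

include hr hπ

lemma pi_pow_apply (k : ℕ) (x : Fin (2 * r * n)) :
    (((π ^ k) x : ℕ)) = 2 * r * ((x : ℕ) / (2 * r)) + ((x : ℕ) % (2 * r) + k) % (2 * r) := by
  induction k with
  | zero =>
    have h1 : ((x : ℕ) % (2 * r) + 0) % (2 * r) = (x : ℕ) % (2 * r) := by
      rw [Nat.add_zero]
      exact Nat.mod_mod_of_dvd _ dvd_rfl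
    rw [pow_zero, Equiv.Perm.one_apply, h1]
    exact (Nat.div_add_mod _ _).symm
  | succ k ih =>
    rw [pow_succ', Equiv.Perm.mul_apply, hπ]
    have hlt : ((x : ℕ) % (2 * r) + k) % (2 * r) < 2 * r := Nat.mod_lt _ (by omega)
    rw [ih]
    rw [Nat.mul_add_div (by omega), Nat.mul_add_mod]
    rw [Nat.div_eq_of_lt hlt, Nat.mod_eq_of_lt hlt, Nat.add_zero]
    rw [Nat.mod_add_mod, Nat.add_assoc]

lemma blk_pi_pow (k : ℕ) (x : Fin (2 * r * n)) : blk hr ((π ^ k) x) = blk hr x := by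
  apply Fin.ext
  show (((π ^ k) x : ℕ)) / (2 * r) = (x : ℕ) / (2 * r)
  rw [pi_pow_apply hr hπ]
  rw [Nat.mul_add_div (by omega), Nat.div_eq_of_lt (Nat.mod_lt _ (by omega)), Nat.add_zero]

lemma blk_pi (x : Fin (2 * r * n)) : blk hr (π x) = blk hr x := by
  have := blk_pi_pow hr hπ 1 x
  rwa [pow_one] at this

lemma exists_pi_pow {x y : Fin (2 * r * n)} (h : blk hr x = blk hr y) :
    ∃ k : ℕ, (π ^ k) x = y := by
  refine ⟨2 * r - (x : ℕ) % (2 * r) + (y : ℕ) % (2 * r), ?_⟩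
  apply Fin.ext
  rw [pi_pow_apply hr hπ]
  have hd : (x : ℕ) / (2 * r) = (y : ℕ) / (2 * r) := (blk_eq_iff hr).1 h
  have hx : (x : ℕ) % (2 * r) ≤ 2 * r := le_of_lt (Nat.mod_lt _ (by omega))
  have h1 : (x : ℕ) % (2 * r) + (2 * r - (x : ℕ) % (2 * r) + (y : ℕ) % (2 * r))
      = 2 * r + (y : ℕ) % (2 * r) := by omega
  rw [h1, Nat.add_mod_left, Nat.mod_mod_of_dvd _ dvd_rfl, hd]
  exact Nat.div_add_mod _ _

end Pi

section Cent

open scoped Classical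

variable (hr : 0 < r) {π : Equiv.Perm (Fin (2 * r * n))}
  (hπ : ∀ x : Fin (2 * r * n),
    ((π x : ℕ)) = 2 * r * ((x : ℕ) / (2 * r)) + ((x : ℕ) % (2 * r) + 1) % (2 * r))

lemma comm_of_mem {c : Equiv.Perm (Fin (2 * r * n))}
    (hc : c ∈ Subgroup.centralizer {π}) : Commute π c :=
  Subgroup.mem_centralizer_iff.1 hc π rfl

lemma apply_pi_pow_comm {c : Equiv.Perm (Fin (2 * r * n))}
    (hc : c ∈ Subgroup.centralizer {π}) (k : ℕ) (x : Fin (2 * r * n)) :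
    c ((π ^ k) x) = (π ^ k) (c x) := by
  have h : c * π ^ k = π ^ k * c := ((comm_of_mem hc).symm.pow_right k)
  calc c ((π ^ k) x) = (c * π ^ k) x := rfl
  _ = (π ^ k * c) x := by rw [h]
  _ = (π ^ k) (c x) := rfl

include hr hπ

lemma blk_c_eq {c : Equiv.Perm (Fin (2 * r * n))}
    (hc : c ∈ Subgroup.centralizer {π}) {x y : Fin (2 * r * n)}
    (h : blk hr x = blk hr y) : blk hr (c x) = blk hr (c y) := by
  obtain ⟨k, hk⟩ := exists_pi_pow hr hπ h
  rw [← hk, apply_pi_pow_comm hc, blk_pi_pow hr hπ]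

omit hr hπ

def Phi (hr : 0 < r) {π : Equiv.Perm (Fin (2 * r * n))}
    (hπ : ∀ x : Fin (2 * r * n),
      ((π x : ℕ)) = 2 * r * ((x : ℕ) / (2 * r)) + ((x : ℕ) % (2 * r) + 1) % (2 * r))
    {c : Equiv.Perm (Fin (2 * r * n))} (hc : c ∈ Subgroup.centralizer {π}) :
    Equiv.Perm (Fin n) where
  toFun j := blk hr (c (base hr j))
  invFun j := blk hr (c⁻¹ (base hr j))
  left_inv j := by
    show blk hr (c⁻¹ (base hr (blk hr (c (base hr j))))) = j
    have h1 : blk hr (base hr (blk hr (c (base hr j)))) = blk hr (c (base hr j)) :=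
      blk_base hr _
    rw [blk_c_eq hr hπ (Subgroup.inv_mem _ hc) h1]
    rw [Equiv.Perm.inv_def, Equiv.symm_apply_apply, blk_base]
  right_inv j := by
    show blk hr (c (base hr (blk hr (c⁻¹ (base hr j))))) = j
    have h1 : blk hr (base hr (blk hr (c⁻¹ (base hr j)))) = blk hr (c⁻¹ (base hr j)) :=
      blk_base hr _
    rw [blk_c_eq hr hπ hc h1]
    rw [Equiv.Perm.inv_def, Equiv.apply_symm_apply, blk_base]

include hr hπ

lemma Phi_blk {c : Equiv.Perm (Fin (2 * r * n))} (hc : c ∈ Subgroup.centralizer {π})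
    (x : Fin (2 * r * n)) : blk hr (c x) = Phi hr hπ hc (blk hr x) := by
  show _ = blk hr (c (base hr (blk hr x)))
  exact blk_c_eq hr hπ hc (blk_base hr (blk hr x)).symm

omit hr hπ

noncomputable def Phi' (hr : 0 < r) {π : Equiv.Perm (Fin (2 * r * n))}
    (hπ : ∀ x : Fin (2 * r * n),
      ((π x : ℕ)) = 2 * r * ((x : ℕ) / (2 * r)) + ((x : ℕ) % (2 * r) + 1) % (2 * r))
    (c : Equiv.Perm (Fin (2 * r * n))) : Equiv.Perm (Fin n) :=
  if hc : c ∈ Subgroup.centralizer {π} then Phi hr hπ hc else 1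

include hr hπ

lemma Phi'_eq {c : Equiv.Perm (Fin (2 * r * n))} (hc : c ∈ Subgroup.centralizer {π}) :
    Phi' hr hπ c = Phi hr hπ hc := dif_pos hc

lemma Phi'_blk {c : Equiv.Perm (Fin (2 * r * n))} (hc : c ∈ Subgroup.centralizer {π})
    (x : Fin (2 * r * n)) : blk hr (c x) = Phi' hr hπ c (blk hr x) := by
  rw [Phi'_eq hr hπ hc]; exact Phi_blk hr hπ hc x

lemma Phi'_apply {c : Equiv.Perm (Fin (2 * r * n))} (hc : c ∈ Subgroup.centralizer {π})
    (j : Fin n) : Phi' hr hπ c j = blk hr (c (base hr j)) := by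
  rw [Phi'_eq hr hπ hc]; rfl

lemma Phi'_one : Phi' hr hπ (1 : Equiv.Perm (Fin (2 * r * n))) = 1 := by
  apply Equiv.ext; intro j
  rw [Phi'_apply hr hπ (Subgroup.one_mem _)]
  simp [blk_base]

lemma Phi'_mul {c d : Equiv.Perm (Fin (2 * r * n))} (hc : c ∈ Subgroup.centralizer {π})
    (hd : d ∈ Subgroup.centralizer {π}) :
    Phi' hr hπ (c * d) = Phi' hr hπ c * Phi' hr hπ d := by
  apply Equiv.ext; intro j
  have h1 : Phi' hr hπ (c * d) (blk hr (base hr j)) = blk hr ((c * d) (base hr j)) :=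
    (Phi'_blk hr hπ (Subgroup.mul_mem _ hc hd) _).symm
  rw [blk_base] at h1
  rw [h1, Equiv.Perm.mul_apply, Equiv.Perm.mul_apply, Phi'_blk hr hπ hc,
    Phi'_blk hr hπ hd, blk_base]

lemma Phi'_inv {c : Equiv.Perm (Fin (2 * r * n))} (hc : c ∈ Subgroup.centralizer {π}) :
    Phi' hr hπ c⁻¹ = (Phi' hr hπ c)⁻¹ := by
  rw [eq_inv_iff_mul_eq_one, ← Phi'_mul hr hπ (Subgroup.inv_mem _ hc) hc,
    inv_mul_cancel, Phi'_one hr hπ]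

lemma Phi'_pow {c : Equiv.Perm (Fin (2 * r * n))} (hc : c ∈ Subgroup.centralizer {π})
    (k : ℕ) : Phi' hr hπ (c ^ k) = (Phi' hr hπ c) ^ k := by
  induction k with
  | zero => simpa using Phi'_one hr hπ
  | succ k ih =>
    rw [pow_succ, pow_succ, Phi'_mul hr hπ (Subgroup.pow_mem _ hc k) hc, ih]

end Cent

section Swaps

variable {β : Type*} [DecidableEq β]

def swProd (f g : ℕ → β) (k : ℕ) : Equiv.Perm β :=
  ((List.range k).map fun m => Equiv.swap (f m) (g m)).prod

lemma swProd_succ (f g : ℕ → β) (k : ℕ) :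
    swProd f g (k + 1) = swProd f g k * Equiv.swap (f k) (g k) := by
  simp [swProd, List.range_succ]

lemma prod_swap_fix (f g : ℕ → β) (k : ℕ) (y : β)
    (h : ∀ m < k, f m ≠ y ∧ g m ≠ y) :
    swProd f g k y = y := by
  induction k with
  | zero => simp [swProd]
  | succ k ih =>
    rw [swProd_succ, Equiv.Perm.mul_apply,
      Equiv.swap_apply_of_ne_of_ne (Ne.symm (h k (by omega)).1) (Ne.symm (h k (by omega)).2)]
    exact ih fun m hm => h m (by omega)

lemma chain_apply (x : ℕ → β) (k : ℕ)
    (hinj : ∀ a ≤ k, ∀ b ≤ k, x a = x b → a = b) :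
    (∀ t < k, swProd x (fun m => x (m + 1)) k (x t) = x (t + 1)) ∧
    swProd x (fun m => x (m + 1)) k (x k) = x 0 := by
  induction k with
  | zero => simp [swProd]
  | succ k ih =>
    have hinj' : ∀ a ≤ k, ∀ b ≤ k, x a = x b → a = b :=
      fun a ha b hb => hinj a (by omega) b (by omega)
    obtain ⟨ih1, ih2⟩ := ih hinj'
    constructor
    · intro t ht
      rw [swProd_succ, Equiv.Perm.mul_apply]
      rcases Nat.lt_or_ge t k with h | h
      · rw [Equiv.swap_apply_of_ne_of_ne
          (fun e => by have := hinj k (by omega) t (by omega) e.symm; omega)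
          (fun e => by have := hinj (k+1) (by omega) t (by omega) e.symm; omega)]
        exact ih1 t h
      · have ht' : t = k := by omega
        subst ht'
        rw [Equiv.swap_apply_left]
        exact prod_swap_fix _ _ _ _ fun m hm =>
          ⟨fun e => by have := hinj m (by omega) (t+1) (by omega) e; omega,
           fun e => by have := hinj (m+1) (by omega) (t+1) (by omega) e; omega⟩
    · rw [swProd_succ, Equiv.Perm.mul_apply, Equiv.swap_apply_right]
      exact ih2

lemma disj_apply (a b : ℕ → β) (k : ℕ)
    (ha : ∀ m < k, ∀ m' < k, a m = a m' → m = m')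
    (hb : ∀ m < k, ∀ m' < k, b m = b m' → m = m')
    (hab : ∀ m < k, ∀ m' < k, a m ≠ b m') :
    ∀ t < k, swProd a b k (a t) = b t := by
  induction k with
  | zero => omega
  | succ k ih =>
    intro t ht
    rw [swProd_succ, Equiv.Perm.mul_apply]
    rcases Nat.lt_or_ge t k with h | h
    · rw [Equiv.swap_apply_of_ne_of_ne
        (fun e => by have := ha k (by omega) t (by omega) e.symm; omega)
        (fun e => (hab t (by omega) k (by omega) e).elim)]
      exact ih (fun m hm m' hm' => ha m (by omega) m' (by omega))
        (fun m hm m' hm' => hb m (by omega) m' (by omega))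
        (fun m hm m' hm' => hab m (by omega) m' (by omega)) t h
    · have ht' : t = k := by omega
      subst ht'
      rw [Equiv.swap_apply_left]
      exact prod_swap_fix _ _ _ _ fun m hm =>
        ⟨fun e => hab m (by omega) t (by omega) e,
         fun e => by have := hb m (by omega) t (by omega) e; omega⟩

lemma sign_swProd (a b : ℕ → β) (k : ℕ) [Fintype β]
    (hab : ∀ m < k, a m ≠ b m) :
    Equiv.Perm.sign (swProd a b k) = (-1) ^ k := by
  induction k with
  | zero => simp [swProd]
  | succ k ih =>
    rw [swProd_succ, map_mul, ih (fun m hm => hab m (by omega)),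
      Equiv.Perm.sign_swap (hab k (by omega)), pow_succ]

end Swaps

section AB

/-- the `m`-th point of block `j`. -/
def pt (hr : 0 < r) {j : ℕ} (hn : j < n) (m : ℕ) : Fin (2 * r * n) :=
  ⟨2 * r * j + m % (2 * r), by
    have h1 : m % (2 * r) < 2 * r := Nat.mod_lt _ (by omega)
    have h2 : 2 * r * (j + 1) ≤ 2 * r * n := Nat.mul_le_mul_left _ (by omega)
    have h3 : 2 * r * (j + 1) = 2 * r * j + 2 * r := by ring
    omega⟩

lemma pt_val (hr : 0 < r) {j : ℕ} (hn : j < n) (m : ℕ) (hm : m < 2 * r) :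
    ((pt hr hn m : ℕ)) = 2 * r * j + m := by
  simp [pt, Nat.mod_eq_of_lt hm]

lemma div_pt (hr : 0 < r) {j : ℕ} (hn : j < n) (m : ℕ) (hm : m < 2 * r) :
    ((pt hr hn m : ℕ)) / (2 * r) = j := by
  rw [pt_val hr hn m hm, Nat.mul_add_div (by omega), Nat.div_eq_of_lt hm, Nat.add_zero]

lemma pt_inj (hr : 0 < r) {j : ℕ} (hn : j < n) {a b : ℕ} (ha : a < 2 * r) (hb : b < 2 * r)
    (e : pt hr hn a = pt hr hn b) : a = b := by
  have := congrArg Fin.val e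
  rw [pt_val hr hn a ha, pt_val hr hn b hb] at this
  omega

lemma pt_ne_of_ne (hr : 0 < r) {j j' : ℕ} (hn : j < n) (hn' : j' < n) {a b : ℕ} (ha : a < 2 * r)
    (hb : b < 2 * r) (hjj : j ≠ j') : pt hr hn a ≠ pt hr hn' b := by
  intro e
  have := congrArg Fin.val e
  rw [pt_val hr hn a ha, pt_val hr hn' b hb] at this
  have h2 : 2 * r * (j + 1) ≤ 2 * r * j' ∨ 2 * r * (j' + 1) ≤ 2 * r * j := by
    rcases Nat.lt_or_ge j j' with h | h
    · exact Or.inl (Nat.mul_le_mul_left _ (by omega))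
    · exact Or.inr (Nat.mul_le_mul_left _ (by omega))
  have h3 : 2 * r * (j + 1) = 2 * r * j + 2 * r := by ring
  have h4 : 2 * r * (j' + 1) = 2 * r * j' + 2 * r := by ring
  omega

lemma A_eq (hr : 0 < r) {j : ℕ} (hj : j < n) {A : Equiv.Perm (Fin (2 * r * n))}
    (hA : ∀ x : Fin (2 * r * n),
      ((A x : ℕ)) = if (x : ℕ) / (2 * r) = j
        then 2 * r * j + ((x : ℕ) % (2 * r) + 1) % (2 * r) else (x : ℕ)) :
    A = swProd (pt hr hj) (fun m => pt hr hj (m + 1)) (2 * r - 1) := by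
  obtain ⟨ch1, ch2⟩ := chain_apply (pt hr hj) (2 * r - 1)
    (fun a ha b hb e => pt_inj hr hj (by omega) (by omega) e)
  apply Equiv.ext; intro v
  apply Fin.ext
  rcases Nat.decEq ((v : ℕ) / (2 * r)) j with hv | hv
  · rw [hA v, if_neg hv]
    have hfix : swProd (pt hr hj) (fun m => pt hr hj (m + 1)) (2 * r - 1) v = v := by
      apply prod_swap_fix
      intro m hm
      constructor
      · intro e
        exact hv ((congrArg Fin.val e) ▸ div_pt hr hj m (by omega))
      · intro e
        exact hv ((congrArg Fin.val e) ▸ div_pt hr hj (m + 1) (by omega))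
    rw [hfix]
  · have hA_v : ((A v : ℕ)) = 2 * r * j + ((v : ℕ) % (2 * r) + 1) % (2 * r) := by
      rw [hA v, if_pos hv]
    have hm : (v : ℕ) % (2 * r) < 2 * r := Nat.mod_lt _ (by omega)
    have hv' : v = pt hr hj ((v : ℕ) % (2 * r)) := by
      apply Fin.ext
      rw [pt_val hr hj _ hm, ← hv]
      exact (Nat.div_add_mod _ _).symm
    rcases Nat.lt_or_ge ((v : ℕ) % (2 * r)) (2 * r - 1) with h | h
    · have hch := ch1 _ h
      rw [← hv'] at hch
      rw [hA_v, hch, pt_val hr hj _ (by omega), Nat.mod_eq_of_lt (by omega)]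
    · have hm0 : (v : ℕ) % (2 * r) = 2 * r - 1 := by omega
      have hvv : v = pt hr hj (2 * r - 1) := by rw [hv', hm0]
      rw [← hvv] at ch2
      rw [hA_v, ch2, pt_val hr hj 0 (by omega), hm0]
      have h1 : 2 * r - 1 + 1 = 2 * r := by omega
      rw [h1, Nat.mod_self]

lemma sign_A (hr : 0 < r) {j : ℕ} (hj : j < n) {A : Equiv.Perm (Fin (2 * r * n))}
    (hA : ∀ x : Fin (2 * r * n),
      ((A x : ℕ)) = if (x : ℕ) / (2 * r) = j
        then 2 * r * j + ((x : ℕ) % (2 * r) + 1) % (2 * r) else (x : ℕ)) :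
    Equiv.Perm.sign A = -1 := by
  rw [A_eq hr hj hA, sign_swProd _ _ _ (fun m hm e =>
    by have := pt_inj hr hj (by omega) (by omega) e; omega)]
  exact Odd.neg_one_pow ⟨r - 1, by omega⟩

lemma B_eq (hr : 0 < r) {i : ℕ} (hi : i + 1 < n) {B : Equiv.Perm (Fin (2 * r * n))}
    (hB : ∀ x : Fin (2 * r * n),
      ((B x : ℕ)) = if (x : ℕ) / (2 * r) = i then (x : ℕ) + 2 * r
        else if (x : ℕ) / (2 * r) = i + 1 then (x : ℕ) - 2 * r else (x : ℕ)) :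
    B = swProd (pt hr (show i < n by omega)) (pt hr hi) (2 * r) := by
  have hi0 : i < n := by omega
  have ha : ∀ m < 2 * r, ∀ m' < 2 * r, pt hr hi0 m = pt hr hi0 m' → m = m' :=
    fun m hm m' hm' e => pt_inj hr hi0 hm hm' e
  have hb : ∀ m < 2 * r, ∀ m' < 2 * r, pt hr hi m = pt hr hi m' → m = m' :=
    fun m hm m' hm' e => pt_inj hr hi hm hm' e
  have hab : ∀ m < 2 * r, ∀ m' < 2 * r, pt hr hi0 m ≠ pt hr hi m' :=
    fun m hm m' hm' => pt_ne_of_ne hr hi0 hi hm hm' (by omega)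
  have hd1 := disj_apply (pt hr hi0) (pt hr hi) (2 * r) ha hb hab
  have hswc : swProd (pt hr hi0) (pt hr hi) (2 * r) = swProd (pt hr hi) (pt hr hi0) (2 * r) := by
    unfold swProd
    congr 1
    apply List.map_congr_left
    intro m _
    exact Equiv.swap_comm _ _
  have hd2 := disj_apply (pt hr hi) (pt hr hi0) (2 * r) hb ha
    (fun m hm m' hm' e => hab m' hm' m hm e.symm)
  apply Equiv.ext; intro v
  apply Fin.ext
  rcases Nat.decEq ((v : ℕ) / (2 * r)) i with hv | hv
  · rcases Nat.decEq ((v : ℕ) / (2 * r)) (i + 1) with hv2 | hv2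
    · -- v in neither block : fixed on both sides
      rw [hB v, if_neg hv, if_neg hv2]
      have hfix : swProd (pt hr hi0) (pt hr hi) (2 * r) v = v := by
        apply prod_swap_fix
        intro m hm
        exact ⟨fun e => hv ((congrArg Fin.val e) ▸ div_pt hr hi0 m hm),
               fun e => hv2 ((congrArg Fin.val e) ▸ div_pt hr hi m hm)⟩
      rw [hfix]
    · -- v in block i+1
      have hm : (v : ℕ) % (2 * r) < 2 * r := Nat.mod_lt _ (by omega)
      have hv' : v = pt hr hi ((v : ℕ) % (2 * r)) := by
        apply Fin.ext
        rw [pt_val hr hi _ hm, ← hv2]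
        exact (Nat.div_add_mod _ _).symm
      have hch := hd2 _ hm
      rw [← hv'] at hch
      rw [← hswc] at hch
      rw [hB v, if_neg hv, if_pos hv2, hch, pt_val hr hi0 _ hm]
      have : (v : ℕ) = 2 * r * (i + 1) + (v : ℕ) % (2 * r) := by
        rw [← hv2]; exact (Nat.div_add_mod _ _).symm
      have hlink : 2 * r * (i + 1) = 2 * r * i + 2 * r := by ring
      omega
  · -- v in block i
    have hm : (v : ℕ) % (2 * r) < 2 * r := Nat.mod_lt _ (by omega)
    have hv' : v = pt hr hi0 ((v : ℕ) % (2 * r)) := by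
      apply Fin.ext
      rw [pt_val hr hi0 _ hm, ← hv]
      exact (Nat.div_add_mod _ _).symm
    have hch := hd1 _ hm
    rw [← hv'] at hch
    rw [hB v, if_pos hv, hch, pt_val hr hi _ hm]
    have : (v : ℕ) = 2 * r * i + (v : ℕ) % (2 * r) := by
      rw [← hv]; exact (Nat.div_add_mod _ _).symm
    have hlink : 2 * r * (i + 1) = 2 * r * i + 2 * r := by ring
    omega

lemma sign_B (hr : 0 < r) {i : ℕ} (hi : i + 1 < n) {B : Equiv.Perm (Fin (2 * r * n))}
    (hB : ∀ x : Fin (2 * r * n),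
      ((B x : ℕ)) = if (x : ℕ) / (2 * r) = i then (x : ℕ) + 2 * r
        else if (x : ℕ) / (2 * r) = i + 1 then (x : ℕ) - 2 * r else (x : ℕ)) :
    Equiv.Perm.sign B = 1 := by
  rw [B_eq hr hi hB, sign_swProd _ _ _ (fun m hm =>
    pt_ne_of_ne hr (show i < n by omega) hi hm hm (by omega))]
  exact Even.neg_one_pow ⟨r, by omega⟩

end AB

section PhiAB

variable (hr : 0 < r) {π : Equiv.Perm (Fin (2 * r * n))}
  (hπ : ∀ x : Fin (2 * r * n),
    ((π x : ℕ)) = 2 * r * ((x : ℕ) / (2 * r)) + ((x : ℕ) % (2 * r) + 1) % (2 * r))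

include hr hπ

lemma Phi'_A {j : ℕ} (hj : j < n) {A : Equiv.Perm (Fin (2 * r * n))}
    (hA : ∀ x : Fin (2 * r * n),
      ((A x : ℕ)) = if (x : ℕ) / (2 * r) = j
        then 2 * r * j + ((x : ℕ) % (2 * r) + 1) % (2 * r) else (x : ℕ))
    (hc : A ∈ Subgroup.centralizer {π}) :
    Phi' hr hπ A = 1 := by
  apply Equiv.ext; intro i
  rw [Phi'_apply hr hπ hc, Equiv.Perm.one_apply]
  apply Fin.ext
  show ((A (base hr i) : ℕ)) / (2 * r) = (i : ℕ)
  have hbase : ((base hr i : ℕ)) = 2 * r * (i : ℕ) := rfl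
  have hdiv : ((base hr i : ℕ)) / (2 * r) = (i : ℕ) := by
    rw [hbase]; exact Nat.mul_div_cancel_left _ (by omega)
  rcases Nat.decEq ((i : ℕ)) j with hij | hij
  · rw [hA, hdiv, if_neg hij, hdiv]
  · rw [hA, hdiv, if_pos hij, hbase, Nat.mul_mod_right]
    have h1 : (0 + 1) % (2 * r) = 1 := Nat.mod_eq_of_lt (by omega)
    rw [h1, Nat.mul_add_div (by omega), Nat.div_eq_of_lt (by omega), Nat.add_zero, hij]

lemma Phi'_B {i : ℕ} (hi : i + 1 < n) {B : Equiv.Perm (Fin (2 * r * n))}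
    (hB : ∀ x : Fin (2 * r * n),
      ((B x : ℕ)) = if (x : ℕ) / (2 * r) = i then (x : ℕ) + 2 * r
        else if (x : ℕ) / (2 * r) = i + 1 then (x : ℕ) - 2 * r else (x : ℕ))
    (hc : B ∈ Subgroup.centralizer {π}) :
    Phi' hr hπ B = Equiv.swap ⟨i, by omega⟩ ⟨i + 1, hi⟩ := by
  apply Equiv.ext; intro l
  rw [Phi'_apply hr hπ hc]
  have hbase : ((base hr l : ℕ)) = 2 * r * (l : ℕ) := rfl
  have hdiv : ((base hr l : ℕ)) / (2 * r) = (l : ℕ) := by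
    rw [hbase]; exact Nat.mul_div_cancel_left _ (by omega)
  rcases Nat.decEq ((l : ℕ)) i with hl | hl
  · rcases Nat.decEq ((l : ℕ)) (i + 1) with hl2 | hl2
    · have hswap : Equiv.swap (⟨i, by omega⟩ : Fin n) ⟨i + 1, hi⟩ l = l :=
        Equiv.swap_apply_of_ne_of_ne (fun e => hl (by rw [e]))
          (fun e => hl2 (by rw [e]))
      rw [hswap]
      have hfix : ((B (base hr l) : ℕ)) = ((base hr l : ℕ)) := by
        rw [hB, hdiv, if_neg hl, if_neg hl2]
      apply Fin.ext
      show ((B (base hr l) : ℕ)) / (2 * r) = (l : ℕ)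
      rw [hfix, hdiv]
    · have hlv : l = (⟨i + 1, hi⟩ : Fin n) := Fin.ext hl2
      conv_rhs => rw [hlv, Equiv.swap_apply_right]
      apply Fin.ext
      show ((B (base hr l) : ℕ)) / (2 * r) = i
      rw [hB, hdiv, if_neg hl, if_pos hl2, hbase, hl2]
      have h2 : 2 * r * (i + 1) - 2 * r = 2 * r * i := by
        have : 2 * r * (i + 1) = 2 * r * i + 2 * r := by ring
        omega
      rw [h2]
      exact Nat.mul_div_cancel_left _ (by omega)
  · have hlv : l = (⟨i, by omega⟩ : Fin n) := Fin.ext hl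
    conv_rhs => rw [hlv, Equiv.swap_apply_left]
    apply Fin.ext
    show ((B (base hr l) : ℕ)) / (2 * r) = i + 1
    rw [hB, hdiv, if_pos hl, hbase, hl]
    have h2 : 2 * r * i + 2 * r = 2 * r * (i + 1) := by ring
    rw [h2]
    exact Nat.mul_div_cancel_left _ (by omega)

end PhiAB

section SignTo

def signTo (u : ℂˣ) (hu : u * u = 1) : ℤˣ →* ℂˣ where
  toFun s := if s = 1 then 1 else u
  map_one' := if_pos rfl
  map_mul' s t := by
    rcases Int.units_eq_one_or s with rfl | rfl <;>
      rcases Int.units_eq_one_or t with rfl | rfl <;>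
      simp [hu]

@[simp] lemma signTo_one (u : ℂˣ) (hu : u * u = 1) : signTo u hu 1 = 1 := rfl

@[simp] lemma signTo_neg_one (u : ℂˣ) (hu : u * u = 1) : signTo u hu (-1) = u := by
  show (if (-1 : ℤˣ) = 1 then (1:ℂˣ) else u) = u
  rw [if_neg (by decide)]

end SignTo

lemma neg_one_sq_units : (-1 : ℂˣ) * -1 = 1 := by rw [neg_mul_neg, one_mul]

section RhoEq

variable (hr : 0 < r) {π : Equiv.Perm (Fin (2 * r * n))}
  (hπ : ∀ x : Fin (2 * r * n),
    ((π x : ℕ)) = 2 * r * ((x : ℕ) / (2 * r)) + ((x : ℕ) % (2 * r) + 1) % (2 * r))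

include hr hπ

lemma rho_eq
    {A B : ℕ → Equiv.Perm (Fin (2 * r * n))}
    (hA : ∀ j < n, ∀ x : Fin (2 * r * n),
      ((A j x : ℕ)) = if (x : ℕ) / (2 * r) = j
        then 2 * r * j + ((x : ℕ) % (2 * r) + 1) % (2 * r) else (x : ℕ))
    (hB : ∀ i, i + 1 < n → ∀ x : Fin (2 * r * n),
      ((B i x : ℕ)) = if (x : ℕ) / (2 * r) = i then (x : ℕ) + 2 * r
        else if (x : ℕ) / (2 * r) = i + 1 then (x : ℕ) - 2 * r else (x : ℕ))
    (hgen : Subgroup.centralizer {π} =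
      Subgroup.closure (A '' {j | j < n} ∪ B '' {i | i + 1 < n}))
    {μ : ℂˣ} (hμ : μ * μ = 1)
    (ρ : ↥(Subgroup.centralizer {π}) →* ℂˣ)
    (hρA : ∀ j (_ : j < n) (h : A j ∈ Subgroup.centralizer {π}), ρ ⟨A j, h⟩ = -1)
    (hρB : ∀ i (_ : i + 1 < n) (h : B i ∈ Subgroup.centralizer {π}), ρ ⟨B i, h⟩ = μ)
    {x : Equiv.Perm (Fin (2 * r * n))} (hx : x ∈ Subgroup.centralizer {π}) :
    ρ ⟨x, hx⟩ = signTo (-1) neg_one_sq_units (Equiv.Perm.sign x) *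
      signTo μ hμ (Equiv.Perm.sign (Phi' hr hπ x)) := by
  have hx' : x ∈ Subgroup.closure (A '' {j | j < n} ∪ B '' {i | i + 1 < n}) := hgen ▸ hx
  refine Subgroup.closure_induction
    (p := fun y _ => ∀ hy : y ∈ Subgroup.centralizer {π},
      ρ ⟨y, hy⟩ = signTo (-1) neg_one_sq_units (Equiv.Perm.sign y) *
        signTo μ hμ (Equiv.Perm.sign (Phi' hr hπ y)))
    ?_ ?_ ?_ ?_ hx' hx
  · -- generators
    rintro y (⟨j, hj, rfl⟩ | ⟨i, hi, rfl⟩) <;> intro hy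
    · rw [hρA j hj hy, sign_A hr hj (hA j hj), Phi'_A hr hπ hj (hA j hj) hy,
        Equiv.Perm.sign_one, signTo_one, signTo_neg_one, mul_one]
    · rw [hρB i hi hy, sign_B hr hi (hB i hi), Phi'_B hr hπ hi (hB i hi) hy,
        Equiv.Perm.sign_swap (by simp [Fin.ext_iff]), signTo_one, signTo_neg_one, one_mul]
  · -- one
    intro h1
    have e1 : (⟨1, h1⟩ : ↥(Subgroup.centralizer {π})) = 1 := rfl
    rw [e1, map_one, Equiv.Perm.sign_one, Phi'_one hr hπ, Equiv.Perm.sign_one,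
      signTo_one, signTo_one, mul_one]
  · -- mul
    intro a b ha hb iha ihb hmem
    have haC : a ∈ Subgroup.centralizer {π} := hgen ▸ ha
    have hbC : b ∈ Subgroup.centralizer {π} := hgen ▸ hb
    have e1 : (⟨a * b, hmem⟩ : ↥(Subgroup.centralizer {π})) = ⟨a, haC⟩ * ⟨b, hbC⟩ := rfl
    rw [e1, map_mul, iha haC, ihb hbC,
      show Equiv.Perm.sign (a * b) = Equiv.Perm.sign a * Equiv.Perm.sign b from map_mul _ _ _,
      Phi'_mul hr hπ haC hbC, map_mul, map_mul, map_mul]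
    exact mul_mul_mul_comm _ _ _ _
  · -- inv
    intro a ha iha hmem
    have haC : a ∈ Subgroup.centralizer {π} := hgen ▸ ha
    have e1 : (⟨a⁻¹, hmem⟩ : ↥(Subgroup.centralizer {π})) = (⟨a, haC⟩)⁻¹ := rfl
    rw [e1, map_inv, iha haC,
      show Equiv.Perm.sign a⁻¹ = (Equiv.Perm.sign a)⁻¹ from map_inv _ _,
      Phi'_inv hr hπ haC, map_inv, map_inv, map_inv, mul_inv]

end RhoEq

section Orbits

open scoped Classical

variable {β : Type*} [Fintype β] [DecidableEq β]

def scSetoid (σ : Equiv.Perm β) : Setoid β where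
  r := σ.SameCycle
  iseqv := ⟨fun x => Equiv.Perm.SameCycle.refl σ x, fun h => h.symm, fun h h' => h.trans h'⟩

noncomputable def Qn (σ : Equiv.Perm β) : ℕ := Nat.card (Quotient (scSetoid σ))

noncomputable def cfMap (σ : Equiv.Perm β) (y : β) :
    ↥σ.cycleFactorsFinset ⊕ {y : β // σ y = y} :=
  if h : σ y = y then Sum.inr ⟨y, h⟩ else
    Sum.inl ⟨σ.cycleOf y, by
      rw [Equiv.Perm.cycleOf_mem_cycleFactorsFinset_iff, Equiv.Perm.mem_support]; exact h⟩

lemma cfMap_fixed (σ : Equiv.Perm β) {y : β} (h : σ y = y) :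
    cfMap σ y = Sum.inr ⟨y, h⟩ := dif_pos h

lemma cfMap_moved (σ : Equiv.Perm β) {y : β} (h : ¬ σ y = y) :
    cfMap σ y = Sum.inl ⟨σ.cycleOf y, by
      rw [Equiv.Perm.cycleOf_mem_cycleFactorsFinset_iff, Equiv.Perm.mem_support]; exact h⟩ :=
  dif_neg h

lemma cfMap_resp (σ : Equiv.Perm β) {a b : β} (hab : σ.SameCycle a b) :
    cfMap σ a = cfMap σ b := by
  by_cases ha : σ a = a
  · have hae : a = b := by
      obtain ⟨i, hi⟩ := hab
      rw [← hi, Equiv.Perm.zpow_apply_eq_self_of_apply_eq_self ha]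
    subst hae; rfl
  · by_cases hb : σ b = b
    · exfalso
      obtain ⟨i, hi⟩ := hab.symm
      have hae : b = a := by
        rw [← hi, Equiv.Perm.zpow_apply_eq_self_of_apply_eq_self hb]
      exact ha (hae ▸ hb)
    · rw [cfMap_moved σ ha, cfMap_moved σ hb]
      have := Equiv.Perm.SameCycle.cycleOf_eq hab
      congr 1
      exact Subtype.ext this

noncomputable def quotEquiv (σ : Equiv.Perm β) :
    Quotient (scSetoid σ) ≃ (↥σ.cycleFactorsFinset ⊕ {y : β // σ y = y}) := by
  refine Equiv.ofBijective
    (Quotient.lift (cfMap σ) (fun a b hab => cfMap_resp σ hab)) ⟨?_, ?_⟩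
  · intro qa qb
    induction qa using Quotient.ind
    induction qb using Quotient.ind
    rename_i a b
    intro he
    have he' : cfMap σ a = cfMap σ b := he
    by_cases ha : σ a = a <;> by_cases hb : σ b = b
    · rw [cfMap_fixed σ ha, cfMap_fixed σ hb] at he'
      have : a = b := congrArg Subtype.val (Sum.inr_injective he')
      subst this; rfl
    · rw [cfMap_fixed σ ha, cfMap_moved σ hb] at he'
      exact absurd he' (by simp)
    · rw [cfMap_moved σ ha, cfMap_fixed σ hb] at he'
      exact absurd he' (by simp)
    · rw [cfMap_moved σ ha, cfMap_moved σ hb] at he'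
      have hcyc : σ.cycleOf a = σ.cycleOf b :=
        congrArg Subtype.val (Sum.inl_injective he')
      apply Quotient.sound
      have hbs : b ∈ (σ.cycleOf b).support := by
        rw [Equiv.Perm.mem_support_cycleOf_iff]
        exact ⟨Equiv.Perm.SameCycle.refl σ b, Equiv.Perm.mem_support.2 hb⟩
      rw [← hcyc] at hbs
      exact (Equiv.Perm.mem_support_cycleOf_iff.1 hbs).1
  · intro s
    rcases s with ⟨C, hC⟩ | ⟨y, hy⟩
    · have hCc : C.IsCycle := (Equiv.Perm.mem_cycleFactorsFinset_iff.1 hC).1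
      obtain ⟨a, haC, -⟩ := hCc
      have haSup : a ∈ C.support := Equiv.Perm.mem_support.2 haC
      have hCeq : C = σ.cycleOf a := Equiv.Perm.cycle_is_cycleOf haSup hC
      have haσ : ¬ σ a = a := by
        have := (Equiv.Perm.mem_cycleFactorsFinset_iff.1 hC).2 a haSup
        rw [← this]; exact haC
      refine ⟨⟦a⟧, ?_⟩
      show cfMap σ a = _
      rw [cfMap_moved σ haσ]
      congr 1
      exact Subtype.ext hCeq.symm
    · exact ⟨⟦y⟧, cfMap_fixed σ hy⟩

lemma card_fixed_eq (σ : Equiv.Perm β) :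
    Nat.card {y : β // σ y = y} = Fintype.card β - σ.support.card := by
  rw [Nat.card_eq_fintype_card, Fintype.card_subtype]
  have h1 : σ.support = Finset.univ.filter (fun y => ¬ σ y = y) := by
    ext y; simp [Equiv.Perm.mem_support]
  have h2 := Finset.card_filter_add_card_filter_not
    (s := (Finset.univ : Finset β)) (p := fun y => σ y = y)
  rw [← h1] at h2
  rw [← Finset.card_univ]
  omega

lemma Qn_eq (σ : Equiv.Perm β) :
    Qn σ = σ.cycleFactorsFinset.card + (Fintype.card β - σ.support.card) := by
  rw [Qn, Nat.card_congr (quotEquiv σ), Nat.card_sum, Nat.card_eq_fintype_card,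
    Fintype.card_coe, card_fixed_eq]

lemma sign_eq_orbit_count (σ : Equiv.Perm β) :
    Equiv.Perm.sign σ = (-1 : ℤˣ) ^ (Fintype.card β + Qn σ) := by
  have hs : σ.support.card ≤ Fintype.card β := by
    simpa using Finset.card_le_univ σ.support
  have hsum : σ.cycleType.sum = σ.support.card := Equiv.Perm.sum_cycleType σ
  have hcard : Multiset.card σ.cycleType = σ.cycleFactorsFinset.card := by
    simp [Equiv.Perm.cycleType]
  rw [Equiv.Perm.sign_of_cycleType, hsum, hcard, Qn_eq]
  have hexp : Fintype.card β + (σ.cycleFactorsFinset.card + (Fintype.card β - σ.support.card))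
      = (σ.support.card + σ.cycleFactorsFinset.card)
        + 2 * (Fintype.card β - σ.support.card) := by omega
  conv_rhs => rw [hexp, pow_add, pow_mul]
  norm_num

lemma sign_eq_of_Qn_eq (σ τ : Equiv.Perm β) (h : Qn σ = Qn τ) :
    Equiv.Perm.sign σ = Equiv.Perm.sign τ := by
  rw [sign_eq_orbit_count σ, sign_eq_orbit_count τ, h]

def jointSetoid (π c : Equiv.Perm β) : Setoid β where
  r x y := ∃ g ∈ Subgroup.closure ({π, c} : Set (Equiv.Perm β)), g y = x
  iseqv := by
    constructor
    · exact fun x => ⟨1, Subgroup.one_mem _, rfl⟩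
    · rintro x y ⟨g, hg, he⟩
      exact ⟨g⁻¹, Subgroup.inv_mem _ hg, by rw [← he, Equiv.Perm.inv_def, Equiv.symm_apply_apply]⟩
    · rintro x y z ⟨g, hg, he⟩ ⟨g', hg', he'⟩
      exact ⟨g * g', Subgroup.mul_mem _ hg hg', by rw [Equiv.Perm.mul_apply, he', he]⟩

end Orbits

section StepB

open scoped Classical

variable {β : Type*} [Fintype β] [DecidableEq β]

lemma jQ_conj (π c1 c2 h : Equiv.Perm β) (h1 : h * π * h⁻¹ = c2) (h2 : h * c1 * h⁻¹ = π) :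
    Nat.card (Quotient (jointSetoid π c1)) = Nat.card (Quotient (jointSetoid π c2)) := by
  have hcl : Subgroup.closure ({π, c2} : Set (Equiv.Perm β)) =
      Subgroup.map (MulAut.conj h).toMonoidHom (Subgroup.closure {π, c1}) := by
    rw [MonoidHom.map_closure]
    congr 1
    rw [Set.image_pair]
    have e1 : (MulAut.conj h).toMonoidHom π = c2 := by
      simpa [MulAut.conj_apply] using h1
    have e2 : (MulAut.conj h).toMonoidHom c1 = π := by
      simpa [MulAut.conj_apply] using h2
    rw [e1, e2, Set.pair_comm]
  refine Nat.card_congr (Quotient.congr (h : β ≃ β) ?_)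
  intro a b
  show (∃ g ∈ Subgroup.closure ({π, c1} : Set (Equiv.Perm β)), g b = a) ↔
    (∃ g ∈ Subgroup.closure ({π, c2} : Set (Equiv.Perm β)), g (h b) = h a)
  constructor
  · rintro ⟨g, hg, he⟩
    refine ⟨h * g * h⁻¹, ?_, ?_⟩
    · rw [hcl]; exact Subgroup.mem_map.2 ⟨g, hg, rfl⟩
    · show (h * g * h⁻¹) (h b) = h a
      rw [Equiv.Perm.mul_apply, Equiv.Perm.mul_apply, Equiv.Perm.inv_def, Equiv.symm_apply_apply, he]
  · rintro ⟨g', hg', he⟩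
    rw [hcl] at hg'
    obtain ⟨g, hg, rfl⟩ := Subgroup.mem_map.1 hg'
    refine ⟨g, hg, ?_⟩
    have he2 : h (g b) = h a := by
      have : ((MulAut.conj h).toMonoidHom g) (h b) = h a := he
      simpa [MulAut.conj_apply, Equiv.Perm.mul_apply] using this
    exact h.injective he2

end StepB

section StepA

open scoped Classical

variable (hr : 0 < r) {π : Equiv.Perm (Fin (2 * r * n))}
  (hπ : ∀ x : Fin (2 * r * n),
    ((π x : ℕ)) = 2 * r * ((x : ℕ) / (2 * r)) + ((x : ℕ) % (2 * r) + 1) % (2 * r))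

include hr hπ

lemma jQ_eq_Qn {c : Equiv.Perm (Fin (2 * r * n))} (hc : c ∈ Subgroup.centralizer {π}) :
    Nat.card (Quotient (jointSetoid π c)) = Qn (Phi' hr hπ c) := by
  have hπmem : π ∈ Subgroup.closure ({π, c} : Set (Equiv.Perm (Fin (2 * r * n)))) :=
    Subgroup.subset_closure (Set.mem_insert _ _)
  have hcmem : c ∈ Subgroup.closure ({π, c} : Set (Equiv.Perm (Fin (2 * r * n)))) :=
    Subgroup.subset_closure (Set.mem_insert_iff.2 (Or.inr rfl))
  have hmove : ∀ g ∈ Subgroup.closure ({π, c} : Set (Equiv.Perm (Fin (2 * r * n)))),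
      ∀ z, (Phi' hr hπ c).SameCycle (blk hr z) (blk hr (g z)) := by
    intro g hg
    induction hg using Subgroup.closure_induction with
    | mem y hy =>
      rcases Set.mem_insert_iff.1 hy with rfl | hy'
      · intro z
        rw [blk_pi hr hπ]
      · rw [Set.mem_singleton_iff.1 hy']
        intro z
        rw [Phi'_blk hr hπ hc]
        exact ⟨1, by rw [zpow_one]⟩
    | one => intro z; rw [Equiv.Perm.one_apply]
    | mul a b ha hb iha ihb =>
      intro z
      rw [Equiv.Perm.mul_apply]
      exact (ihb z).trans (iha (b z))
    | inv a ha iha =>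
      intro z
      have := (iha (a⁻¹ z)).symm
      rwa [Equiv.Perm.inv_def, Equiv.apply_symm_apply] at this
  refine Nat.card_congr (Equiv.ofBijective
    (Quotient.lift (fun z => (⟦blk hr z⟧ : Quotient (scSetoid (Phi' hr hπ c)))) ?_) ⟨?_, ?_⟩)
  · rintro a b ⟨g, hg, he⟩
    apply Quotient.sound
    have := hmove g hg b
    rw [he] at this
    exact this.symm
  · intro qa qb
    induction qa using Quotient.ind
    induction qb using Quotient.ind
    rename_i a b
    intro he
    have hsc : (Phi' hr hπ c).SameCycle (blk hr a) (blk hr b) := Quotient.exact he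
    obtain ⟨i, -, hpe⟩ := hsc.exists_pow_eq'
    have hblk : blk hr ((c ^ i) a) = blk hr b := by
      rw [Phi'_blk hr hπ (Subgroup.pow_mem _ hc i), Phi'_pow hr hπ hc]
      exact hpe
    obtain ⟨k, hk⟩ := exists_pi_pow hr hπ hblk
    apply Quotient.sound
    have hrel : (jointSetoid π c).r b a :=
      ⟨π ^ k * c ^ i, Subgroup.mul_mem _ (Subgroup.pow_mem _ hπmem k)
        (Subgroup.pow_mem _ hcmem i), by rw [Equiv.Perm.mul_apply, hk]⟩
    exact (jointSetoid π c).iseqv.symm hrel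
  · intro qj
    induction qj using Quotient.ind
    rename_i j
    exact ⟨Quotient.mk (jointSetoid π c) (base hr j),
      by show (⟦blk hr (base hr j)⟧ : Quotient _) = _; rw [blk_base]⟩

end StepA

section Key

variable (hr : 0 < r) {π : Equiv.Perm (Fin (2 * r * n))}
  (hπ : ∀ x : Fin (2 * r * n),
    ((π x : ℕ)) = 2 * r * ((x : ℕ) / (2 * r)) + ((x : ℕ) % (2 * r) + 1) % (2 * r))

include hr hπ

lemma key
    {A B : ℕ → Equiv.Perm (Fin (2 * r * n))}
    (hA : ∀ j < n, ∀ x : Fin (2 * r * n),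
      ((A j x : ℕ)) = if (x : ℕ) / (2 * r) = j
        then 2 * r * j + ((x : ℕ) % (2 * r) + 1) % (2 * r) else (x : ℕ))
    (hB : ∀ i, i + 1 < n → ∀ x : Fin (2 * r * n),
      ((B i x : ℕ)) = if (x : ℕ) / (2 * r) = i then (x : ℕ) + 2 * r
        else if (x : ℕ) / (2 * r) = i + 1 then (x : ℕ) - 2 * r else (x : ℕ))
    (hgen : Subgroup.centralizer {π} =
      Subgroup.closure (A '' {j | j < n} ∪ B '' {i | i + 1 < n}))
    {μ : ℂˣ} (hμ : μ * μ = 1)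
    (ρ : ↥(Subgroup.centralizer {π}) →* ℂˣ)
    (hρA : ∀ j (_ : j < n) (h : A j ∈ Subgroup.centralizer {π}), ρ ⟨A j, h⟩ = -1)
    (hρB : ∀ i (_ : i + 1 < n) (h : B i ∈ Subgroup.centralizer {π}), ρ ⟨B i, h⟩ = μ)
    (h : Equiv.Perm (Fin (2 * r * n)))
    (hc1 : h⁻¹ * π * h ∈ Subgroup.centralizer {π})
    (hc2 : h * π * h⁻¹ ∈ Subgroup.centralizer {π}) :
    ρ ⟨h⁻¹ * π * h, hc1⟩ * ρ ⟨h * π * h⁻¹, hc2⟩ = 1 := by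
  have hconj : ∀ u v : ℤˣ, u⁻¹ * v * u = v := fun u v => by
    rw [mul_comm u⁻¹ v, mul_assoc, inv_mul_cancel, mul_one]
  have e1 : Equiv.Perm.sign (h⁻¹ * π * h) = Equiv.Perm.sign π := by
    rw [map_mul, map_mul, map_inv, hconj]
  have e2 : Equiv.Perm.sign (h * π * h⁻¹) = Equiv.Perm.sign π := by
    rw [map_mul, map_mul, map_inv]
    rw [mul_comm (Equiv.Perm.sign h) (Equiv.Perm.sign π), mul_assoc, mul_inv_cancel, mul_one]
  have hQ : Qn (Phi' hr hπ (h⁻¹ * π * h)) = Qn (Phi' hr hπ (h * π * h⁻¹)) := by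
    rw [← jQ_eq_Qn hr hπ hc1, ← jQ_eq_Qn hr hπ hc2]
    exact jQ_conj π (h⁻¹ * π * h) (h * π * h⁻¹) h rfl (by group)
  have hsgn2 : Equiv.Perm.sign (Phi' hr hπ (h⁻¹ * π * h))
      = Equiv.Perm.sign (Phi' hr hπ (h * π * h⁻¹)) := sign_eq_of_Qn_eq _ _ hQ
  rw [rho_eq hr hπ hA hB hgen hμ ρ hρA hρB hc1, rho_eq hr hπ hA hB hgen hμ ρ hρA hρB hc2]
  rw [e1, e2, hsgn2, mul_mul_mul_comm]
  rw [show (signTo (-1) neg_one_sq_units) (Equiv.Perm.sign π) *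
        (signTo (-1) neg_one_sq_units) (Equiv.Perm.sign π)
      = signTo (-1) neg_one_sq_units (Equiv.Perm.sign π * Equiv.Perm.sign π) from
      (map_mul _ _ _).symm]
  rw [show (signTo μ hμ) (Equiv.Perm.sign (Phi' hr hπ (h * π * h⁻¹))) *
        (signTo μ hμ) (Equiv.Perm.sign (Phi' hr hπ (h * π * h⁻¹)))
      = signTo μ hμ (Equiv.Perm.sign (Phi' hr hπ (h * π * h⁻¹)) *
          Equiv.Perm.sign (Phi' hr hπ (h * π * h⁻¹))) from (map_mul _ _ _).symm]
  rw [Int.units_mul_self, Int.units_mul_self, map_one, map_one, mul_one]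

end Key

end Stmt12Aux




/-- Let `r ≥ 2` be odd, `n ≥ 2`.  In `S_{2rn}` (on `Fin (2*r*n)`,
`0`-indexed), for `0 ≤ j < n` let `A j` be the `2r`-cycle on the `j`-th block of size
`2r`, `π = A_0 ⋯ A_{n-1}`, and for `0 ≤ i < n-1` let `B i` swap blocks `i` and `i+1`
position-by-position, so that the centralizer of `π` is generated by the `A j`'s and
`B i`'s.  Let `μ ∈ {1,-1}` and let `ρ` be a homomorphism from the centralizer of `π`
to `ℂˣ` with `ρ(A j) = -1`, `ρ(B i) = μ`, and `ρ(π) = -1`.  Then for all commuting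
`t, t'` in the conjugacy class of `π` and all `g, g'` with `g π g⁻¹ = t`,
`g' π g'⁻¹ = t'`, the elements `g'⁻¹ t g'` and `g⁻¹ t' g` lie in the centralizer of
`π`, `ρ(g⁻¹ t g) = -1` and `ρ(g'⁻¹ t g') · ρ(g⁻¹ t' g) = 1`: for `r` odd and
`ρ = χ_{r,…,r} ⊗ μ` with `ρ(π) = -1`, the braiding is negative. -/
theorem stmt12 (r n : ℕ) (hr : 2 ≤ r) (hrodd : Odd r) (hn : 2 ≤ n)
    (A : ℕ → Equiv.Perm (Fin (2 * r * n)))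
    (hA : ∀ j < n, ∀ x : Fin (2 * r * n),
      ((A j x : ℕ)) = if (x : ℕ) / (2 * r) = j
        then 2 * r * j + ((x : ℕ) % (2 * r) + 1) % (2 * r) else (x : ℕ))
    (π : Equiv.Perm (Fin (2 * r * n)))
    (hπ : ∀ x : Fin (2 * r * n),
      ((π x : ℕ)) = 2 * r * ((x : ℕ) / (2 * r)) + ((x : ℕ) % (2 * r) + 1) % (2 * r))
    (B : ℕ → Equiv.Perm (Fin (2 * r * n)))
    (hB : ∀ i, i + 1 < n → ∀ x : Fin (2 * r * n),
      ((B i x : ℕ)) = if (x : ℕ) / (2 * r) = i then (x : ℕ) + 2 * r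
        else if (x : ℕ) / (2 * r) = i + 1 then (x : ℕ) - 2 * r else (x : ℕ))
    (hgen : Subgroup.centralizer {π} =
      Subgroup.closure (A '' {j | j < n} ∪ B '' {i | i + 1 < n}))
    (μ : ℂˣ) (hμ : μ = 1 ∨ μ = -1)
    (ρ : ↥(Subgroup.centralizer {π}) →* ℂˣ)
    (hρA : ∀ j (_ : j < n) (h : A j ∈ Subgroup.centralizer {π}), ρ ⟨A j, h⟩ = -1)
    (hρB : ∀ i (_ : i + 1 < n) (h : B i ∈ Subgroup.centralizer {π}), ρ ⟨B i, h⟩ = μ)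
    (hρπ : ∀ h : π ∈ Subgroup.centralizer {π}, ρ ⟨π, h⟩ = -1)
    (t t' : Equiv.Perm (Fin (2 * r * n))) (hcomm : t * t' = t' * t)
    (g g' : Equiv.Perm (Fin (2 * r * n))) (hg : g * π * g⁻¹ = t) (hg' : g' * π * g'⁻¹ = t') :
    g'⁻¹ * t * g' ∈ Subgroup.centralizer {π} ∧
    g⁻¹ * t' * g ∈ Subgroup.centralizer {π} ∧
    (∀ h : g⁻¹ * t * g ∈ Subgroup.centralizer {π}, ρ ⟨g⁻¹ * t * g, h⟩ = -1) ∧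
    (∀ (h1 : g'⁻¹ * t * g' ∈ Subgroup.centralizer {π})
       (h2 : g⁻¹ * t' * g ∈ Subgroup.centralizer {π}),
      ρ ⟨g'⁻¹ * t * g', h1⟩ * ρ ⟨g⁻¹ * t' * g, h2⟩ = 1) := by
  have hr0 : 0 < r := by omega
  have hμ2 : μ * μ = 1 := by
    rcases hμ with rfl | rfl
    · rw [one_mul]
    · exact Stmt12Aux.neg_one_sq_units
  have hπ1 : π = g'⁻¹ * t' * g' := by rw [← hg']; group
  have hπ2 : π = g⁻¹ * t * g := by rw [← hg]; group
  have h1 : g'⁻¹ * t * g' ∈ Subgroup.centralizer {π} := by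
    rw [Subgroup.mem_centralizer_iff]
    intro y hy
    rw [Set.mem_singleton_iff] at hy
    rw [hy]
    calc π * (g'⁻¹ * t * g') = (g'⁻¹ * t' * g') * (g'⁻¹ * t * g') := by rw [← hπ1]
    _ = g'⁻¹ * (t' * t) * g' := by group
    _ = g'⁻¹ * (t * t') * g' := by rw [hcomm]
    _ = (g'⁻¹ * t * g') * (g'⁻¹ * t' * g') := by group
    _ = (g'⁻¹ * t * g') * π := by rw [← hπ1]
  have h2 : g⁻¹ * t' * g ∈ Subgroup.centralizer {π} := by
    rw [Subgroup.mem_centralizer_iff]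
    intro y hy
    rw [Set.mem_singleton_iff] at hy
    rw [hy]
    calc π * (g⁻¹ * t' * g) = (g⁻¹ * t * g) * (g⁻¹ * t' * g) := by rw [← hπ2]
    _ = g⁻¹ * (t * t') * g := by group
    _ = g⁻¹ * (t' * t) * g := by rw [hcomm]
    _ = (g⁻¹ * t' * g) * (g⁻¹ * t * g) := by group
    _ = (g⁻¹ * t' * g) * π := by rw [← hπ2]
  refine ⟨h1, h2, ?_, ?_⟩
  · intro hmem
    have hπC : π ∈ Subgroup.centralizer {π} := hπ2 ▸ hmem
    have e : (⟨g⁻¹ * t * g, hmem⟩ : ↥(Subgroup.centralizer {π})) = ⟨π, hπC⟩ :=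
      Subtype.ext hπ2.symm
    rw [e]
    exact hρπ hπC
  · intro hm1 hm2
    have e1 : g'⁻¹ * t * g' = (g⁻¹ * g')⁻¹ * π * (g⁻¹ * g') := by rw [← hg]; group
    have e2 : g⁻¹ * t' * g = (g⁻¹ * g') * π * (g⁻¹ * g')⁻¹ := by rw [← hg']; group
    have hm1' : (g⁻¹ * g')⁻¹ * π * (g⁻¹ * g') ∈ Subgroup.centralizer {π} := e1 ▸ hm1
    have hm2' : (g⁻¹ * g') * π * (g⁻¹ * g')⁻¹ ∈ Subgroup.centralizer {π} := e2 ▸ hm2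
    have q1 : (⟨g'⁻¹ * t * g', hm1⟩ : ↥(Subgroup.centralizer {π}))
        = ⟨(g⁻¹ * g')⁻¹ * π * (g⁻¹ * g'), hm1'⟩ := Subtype.ext e1
    have q2 : (⟨g⁻¹ * t' * g, hm2⟩ : ↥(Subgroup.centralizer {π}))
        = ⟨(g⁻¹ * g') * π * (g⁻¹ * g')⁻¹, hm2'⟩ := Subtype.ext e2
    rw [q1, q2]
    exact Stmt12Aux.key hr0 hπ hA hB hgen hμ2 ρ hρA hρB (g⁻¹ * g') hm1' hm2'
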